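/- Let h = (I, E) be a hypergraph with |I| = d and let c_y : I → {1,…,m} be the coloring associated to an integer point y ∈ {1,…,m}^I via c_y(i) = y(i). Then y is a P(h)-generic direction (i.e., the y-maximal face of the hypergraphic polytope P(h) is a vertex) if and only if the coloring c_y is proper. Consequently, the number of P(h)-generic directions y ∈ {1,…,m}^I equals the number of proper colorings of h with m colors. -/
import Mathlib


open Set Pointwise
open scoped Classical

noncomputable section

/-- The pairing of a direction `y` with a point `x`: `y(x) = ∑ i, y i * x i`. -/
def evalDir {I : Type*} [Fintype I] (y x : I → ℝ) : ℝ := ∑ i, y i * x i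

/-- A polytope is the convex hull of a nonempty finite set of points. -/
def IsPolytope {I : Type*} [Fintype I] (P : Set (I → ℝ)) : Prop :=
  ∃ V : Finset (I → ℝ), V.Nonempty ∧ P = convexHull ℝ (V : Set (I → ℝ))

/-- The `y`-maximal face of `P`. -/
def maxFace {I : Type*} [Fintype I] (P : Set (I → ℝ)) (y : I → ℝ) : Set (I → ℝ) :=
  {x ∈ P | ∀ x' ∈ P, evalDir y x' ≤ evalDir y x}

/-- The simplex `Δ_e = conv{ b_i : i ∈ e }` of a hyperedge `e`. -/
def hgSimplex {I : Type*} [Fintype I] [DecidableEq I] (e : Finset I) : Set (I → ℝ) :=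
  convexHull ℝ ((fun i => Pi.single i (1 : ℝ)) '' (e : Set I))

/-- The hypergraphic polytope of the hypergraph with hyperedges `edges a`, `a : ι`:
the Minkowski sum `Σ_a Δ_{edges a}`. -/
def hgPolytope {I : Type*} [Fintype I] [DecidableEq I] {ι : Type*} [Fintype ι]
    (edges : ι → Finset I) : Set (I → ℝ) :=
  {x | ∃ f : ι → I → ℝ, (∀ a, f a ∈ hgSimplex (edges a)) ∧ x = ∑ a, f a}

/-- A heading of a hypergraph: a choice of a head `σ e ∈ e` for every hyperedge `e`. -/
def IsHeading {I : Type*} {ι : Type*} (edges : ι → Finset I) (σ : ι → I) : Prop :=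
  ∀ a, σ a ∈ edges a

/-- A heading contains an oriented cycle `e_1, …, e_ℓ` if `σ(e_j) ∈ e_{j+1} \ {σ(e_{j+1})}`
cyclically (indices mod `ℓ`). -/
def HasOrientedCycle {I : Type*} {ι : Type*} (edges : ι → Finset I) (σ : ι → I) : Prop :=
  ∃ (ℓ : ℕ) (a : ℕ → ι), 0 < ℓ ∧
    ∀ j < ℓ, σ (a j) ∈ edges (a ((j + 1) % ℓ)) ∧ σ (a j) ≠ σ (a ((j + 1) % ℓ))

/-- An acyclic heading: a heading with no oriented cycle. -/
def IsAcyclicHeading {I : Type*} {ι : Type*} (edges : ι → Finset I) (σ : ι → I) : Prop :=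
  IsHeading edges σ ∧ ¬ HasOrientedCycle edges σ

/-- The in-degree vector `δ(σ)` of a heading: `δ(σ)_i` is the number of hyperedges with
head `i`. -/
def inDegVec {I : Type*} [DecidableEq I] {ι : Type*} [Fintype ι] (σ : ι → I) : I → ℝ :=
  fun i => ((Finset.univ.filter fun a => σ a = i).card : ℝ)

/-- A coloring `c` of a hypergraph is proper if every hyperedge has a unique maximal node. -/
def IsProperColoring {I : Type*} {ι : Type*} (edges : ι → Finset I) (c : I → ℕ) : Prop :=
  ∀ a, ∃! i, i ∈ edges a ∧ ∀ j ∈ edges a, c j ≤ c i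

/-- A heading `σ` and a coloring `c` are compatible if, for every hyperedge, the head
carries the maximal color of the hyperedge. -/
def Compatible {I : Type*} {ι : Type*} (edges : ι → Finset I) (σ : ι → I) (c : I → ℕ) :
    Prop :=
  ∀ a, ∀ j ∈ edges a, c j ≤ c (σ a)

section Aux

variable {I : Type*} [Fintype I] [DecidableEq I]

lemma evalDir_single (y : I → ℝ) (i : I) : evalDir y (Pi.single i 1) = y i := by
  simp [evalDir, Pi.single_apply, mul_ite]

lemma evalDir_sum_rep {ι : Type*} [Fintype ι] (y : I → ℝ) (f : ι → I → ℝ) :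
    evalDir y (∑ a, f a) = ∑ a, evalDir y (f a) := by
  simp only [evalDir, Finset.sum_apply, Finset.mul_sum]
  exact Finset.sum_comm

lemma single_mem_hgSimplex {e : Finset I} {i : I} (hi : i ∈ e) :
    Pi.single i (1 : ℝ) ∈ hgSimplex e :=
  subset_convexHull ℝ _ ⟨i, hi, rfl⟩

lemma mem_hgSimplex {e : Finset I} {x : I → ℝ} (hx : x ∈ hgSimplex e) :
    (∀ i, 0 ≤ x i) ∧ (∀ i, i ∉ e → x i = 0) ∧ ∑ i, x i = 1 := by
  set S : Set (I → ℝ) :=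
    {x | (∀ i, 0 ≤ x i) ∧ (∀ i, i ∉ e → x i = 0) ∧ ∑ i, x i = 1} with hS
  have hconv : Convex ℝ S := by
    rintro p ⟨hp0, hpe, hps⟩ q ⟨hq0, hqe, hqs⟩ a b ha hb hab
    refine ⟨fun i => ?_, fun i hi => ?_, ?_⟩
    · have := add_nonneg (mul_nonneg ha (hp0 i)) (mul_nonneg hb (hq0 i))
      simpa using this
    · simp [hpe i hi, hqe i hi]
    · simp only [Pi.add_apply, Pi.smul_apply, smul_eq_mul]
      rw [Finset.sum_add_distrib, ← Finset.mul_sum, ← Finset.mul_sum, hps, hqs]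
      simpa using hab
  have hsub : (fun i => Pi.single i (1:ℝ)) '' (e : Set I) ⊆ S := by
    rintro _ ⟨i, hi, rfl⟩
    refine ⟨fun j => ?_, fun j hj => ?_, ?_⟩
    · rcases eq_or_ne j i with rfl | h
      · simp
      · simp [Pi.single_apply, h]
    · have hne : j ≠ i := fun h => hj (h ▸ hi)
      simp [Pi.single_apply, hne]
    · simp [Pi.single_apply]
  exact convexHull_min hsub hconv hx

lemma evalDir_le_of_mem {e : Finset I} {y : I → ℝ} {M : ℝ} (hM : ∀ i ∈ e, y i ≤ M)
    {x : I → ℝ} (hx : x ∈ hgSimplex e) : evalDir y x ≤ M := by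
  obtain ⟨h0, he, hs⟩ := mem_hgSimplex hx
  have hterm : ∀ i ∈ Finset.univ, y i * x i ≤ M * x i := by
    intro i _
    by_cases hie : i ∈ e
    · exact mul_le_mul_of_nonneg_right (hM i hie) (h0 i)
    · simp [he i hie]
  calc evalDir y x ≤ ∑ i, M * x i := Finset.sum_le_sum hterm
    _ = M := by rw [← Finset.mul_sum, hs, mul_one]

lemma eq_zero_of_evalDir_eq {e : Finset I} {y : I → ℝ} {M : ℝ} (hM : ∀ i ∈ e, y i ≤ M)
    {x : I → ℝ} (hx : x ∈ hgSimplex e) (heq : evalDir y x = M)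
    {j : I} (hj : y j < M) : x j = 0 := by
  obtain ⟨h0, he, hs⟩ := mem_hgSimplex hx
  by_contra hne
  have hxj : 0 < x j := lt_of_le_of_ne (h0 j) (Ne.symm hne)
  have hterm : ∀ i ∈ Finset.univ, y i * x i ≤ M * x i := by
    intro i _
    by_cases hie : i ∈ e
    · exact mul_le_mul_of_nonneg_right (hM i hie) (h0 i)
    · simp [he i hie]
  have hlt : ∑ i, y i * x i < ∑ i, M * x i :=
    Finset.sum_lt_sum hterm ⟨j, Finset.mem_univ j, mul_lt_mul_of_pos_right hj hxj⟩
  rw [← Finset.mul_sum, hs, mul_one] at hlt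
  exact absurd heq (ne_of_lt hlt)

end Aux

/-- For a hypergraph `h = (I, E)` and an integer point `y ∈ {1,…,m}^I`,
the direction `y` is `P(h)`-generic (the `y`-maximal face of the hypergraphic polytope is a
vertex) if and only if the associated coloring `c_y(i) = y(i)` is proper. Consequently the
number of `P(h)`-generic directions in `{1,…,m}^I` equals the number of proper colorings of
`h` with `m` colors. -/
theorem stmt11 {I : Type*} [Fintype I] [DecidableEq I] {ι : Type*} [Fintype ι]
    (edges : ι → Finset I) (hE : ∀ a, (edges a).Nonempty) (m : ℕ) (hm : 0 < m) :
    (∀ y : I → ℕ, (∀ i, y i ∈ Finset.Icc 1 m) →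
      ((∃ v, maxFace (hgPolytope edges) (fun i => (y i : ℝ)) = {v}) ↔
        IsProperColoring edges y)) ∧
    Set.ncard {y : I → ℕ | (∀ i, y i ∈ Finset.Icc 1 m) ∧
        ∃ v, maxFace (hgPolytope edges) (fun i => (y i : ℝ)) = {v}} =
      Set.ncard {c : I → ℕ | (∀ i, c i ∈ Finset.Icc 1 m) ∧ IsProperColoring edges c} := by
  have main : ∀ y : I → ℕ,
      ((∃ v, maxFace (hgPolytope edges) (fun i => (y i : ℝ)) = {v}) ↔
        IsProperColoring edges y) := by
    intro y
    set Yr : I → ℝ := fun i => (y i : ℝ) with hYr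
    -- choose a maximal node in every edge
    have hmax : ∀ a, ∃ i ∈ edges a, ∀ j ∈ edges a, y j ≤ y i := fun a =>
      (edges a).exists_max_image y (hE a)
    choose σ hσe hσm using hmax
    have hσmr : ∀ a, ∀ j ∈ edges a, Yr j ≤ Yr (σ a) := fun a j hj =>
      Nat.cast_le.mpr (hσm a j hj)
    set z : I → ℝ := ∑ a, Pi.single (σ a) (1:ℝ) with hz
    have hz_mem : z ∈ hgPolytope edges :=
      ⟨fun a => Pi.single (σ a) 1, fun a => single_mem_hgSimplex (hσe a), rfl⟩
    have hz_val : evalDir Yr z = ∑ a, Yr (σ a) := by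
      rw [hz, evalDir_sum_rep]
      exact Finset.sum_congr rfl fun a _ => evalDir_single Yr (σ a)
    have hub : ∀ x ∈ hgPolytope edges, evalDir Yr x ≤ ∑ a, Yr (σ a) := by
      rintro x ⟨f, hf, rfl⟩
      rw [evalDir_sum_rep]
      exact Finset.sum_le_sum fun a _ => evalDir_le_of_mem (hσmr a) (hf a)
    have hz_face : z ∈ maxFace (hgPolytope edges) Yr :=
      ⟨hz_mem, fun x' hx' => by rw [hz_val]; exact hub x' hx'⟩
    constructor
    · rintro ⟨v, hv⟩ a
      refine ⟨σ a, ⟨hσe a, hσm a⟩, ?_⟩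
      rintro j ⟨hje, hjm⟩
      by_contra hne
      -- build a second point of the max face
      set σ' := Function.update σ a j with hσ'
      have hσ'e : ∀ b, σ' b ∈ edges b := by
        intro b
        rcases eq_or_ne b a with rfl | h
        · simpa [hσ'] using hje
        · simpa [hσ', Function.update_of_ne h] using hσe b
      set z' : I → ℝ := ∑ b, Pi.single (σ' b) (1:ℝ) with hz'
      have hz'_mem : z' ∈ hgPolytope edges :=
        ⟨fun b => Pi.single (σ' b) 1, fun b => single_mem_hgSimplex (hσ'e b), rfl⟩
      have hyj : Yr j = Yr (σ a) :=
        le_antisymm (Nat.cast_le.mpr (hσm a j hje)) (Nat.cast_le.mpr (hjm (σ a) (hσe a)))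
      have hz'_val : evalDir Yr z' = ∑ b, Yr (σ b) := by
        rw [hz', evalDir_sum_rep]
        refine Finset.sum_congr rfl fun b _ => ?_
        rw [evalDir_single]
        rcases eq_or_ne b a with rfl | h
        · simpa [hσ'] using hyj
        · simp [hσ', Function.update_of_ne h]
      have hz'_face : z' ∈ maxFace (hgPolytope edges) Yr :=
        ⟨hz'_mem, fun x' hx' => by rw [hz'_val]; exact hub x' hx'⟩
      have h1 : z = v := by
        have := hv ▸ hz_face; simpa using this
      have h2 : z' = v := by
        have := hv ▸ hz'_face; simpa using this
      have hzz : z = z' := h1.trans h2.symm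
      have hdiff : z (σ a) - z' (σ a) = 1 := by
        have : z (σ a) - z' (σ a)
            = ∑ b, ((Pi.single (σ b) (1:ℝ) : I → ℝ) (σ a) - (Pi.single (σ' b) (1:ℝ) : I → ℝ) (σ a)) := by
          rw [hz, hz', Finset.sum_apply, Finset.sum_apply, Finset.sum_sub_distrib]
        rw [this, Finset.sum_eq_single a]
        · have hja : j ≠ σ a := hne
          simp [hσ', Pi.single_apply, hja]
        · intro b _ hba
          rw [hσ', Function.update_of_ne hba, sub_self]
        · simp
      rw [hzz, sub_self] at hdiff
      norm_num at hdiff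
    · intro hproper
      refine ⟨z, ?_⟩
      ext x
      simp only [Set.mem_singleton_iff]
      constructor
      · rintro ⟨hxP, hxmax⟩
        obtain ⟨f, hf, rfl⟩ := hxP
        -- each piece attains the per-edge maximum
        have hge : ∑ a, Yr (σ a) ≤ evalDir Yr (∑ a, f a) := by
          rw [← hz_val]; exact hxmax z hz_mem
        have hle : ∀ a ∈ Finset.univ, evalDir Yr (f a) ≤ Yr (σ a) := fun a _ =>
          evalDir_le_of_mem (hσmr a) (hf a)
        have hsum : ∑ a, evalDir Yr (f a) = ∑ a, Yr (σ a) := by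
          refine le_antisymm (Finset.sum_le_sum hle) ?_
          rwa [← evalDir_sum_rep]
        have heach : ∀ a ∈ Finset.univ, evalDir Yr (f a) = Yr (σ a) :=
          (Finset.sum_eq_sum_iff_of_le hle).mp hsum
        have hfa : ∀ a, f a = Pi.single (σ a) (1:ℝ) := by
          intro a
          obtain ⟨h0, he, hs⟩ := mem_hgSimplex (hf a)
          have hzero : ∀ k, k ≠ σ a → f a k = 0 := by
            intro k hk
            by_cases hke : k ∈ edges a
            · -- properness: any other node of the edge has strictly smaller color
              have hklt : y k < y (σ a) := by
                rcases lt_or_eq_of_le (hσm a k hke) with h | h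
                · exact h
                · exfalso
                  obtain ⟨i0, hi0, huniq⟩ := hproper a
                  have hk' : k = i0 := huniq k ⟨hke, fun j hj => h ▸ hσm a j hj⟩
                  have hσ' : σ a = i0 := huniq (σ a) ⟨hσe a, hσm a⟩
                  exact hk (hk'.trans hσ'.symm)
              exact eq_zero_of_evalDir_eq (hσmr a) (hf a) (heach a (Finset.mem_univ a))
                (Nat.cast_lt.mpr hklt)
            · exact he k hke
          funext k
          rcases eq_or_ne k (σ a) with rfl | hk
          · have : ∑ i, f a i = f a (σ a) := by
              refine Finset.sum_eq_single (σ a) (fun b _ hb => hzero b hb) ?_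
              intro h; exact absurd (Finset.mem_univ (σ a)) h
            rw [this] at hs
            simp [hs]
          · rw [hzero k hk, Pi.single_apply, if_neg hk]
        rw [hz]
        exact Finset.sum_congr rfl fun a _ => hfa a
      · rintro rfl
        exact hz_face
  refine ⟨fun y _ => main y, ?_⟩
  congr 1
  ext y
  simp only [Set.mem_setOf_eq]
  exact and_congr_right fun _ => main y
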